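/- For every natural number n ≥ 1, the number of permutations of length n avoiding both patterns 132 and 312 equals 2^(n−1). -/

import Mathlib

/-- A permutation `π` of length `n` contains the pattern `p` (a length-`k`
sequence of distinct values, given by its values) if there is a strictly
increasing choice of `k` indices on which `π` is order isomorphic to `p`. -/
def PermContains {n k : ℕ} (π : Equiv.Perm (Fin n)) (p : Fin k → ℕ) : Prop :=
  ∃ f : Fin k → Fin n, StrictMono f ∧ ∀ a b : Fin k, p a < p b ↔ π (f a) < π (f b)

/-- `π` avoids the pattern `p`. -/
def PermAvoids {n k : ℕ} (π : Equiv.Perm (Fin n)) (p : Fin k → ℕ) : Prop :=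
  ¬ PermContains π p

def IsMinMax {n : ℕ} (π : Equiv.Perm (Fin n)) : Prop :=
  ∀ k : Fin n, (∀ j, j < k → π j < π k) ∨ (∀ j, j < k → π k < π j)

lemma strictMono3 {n : ℕ} {a b c : Fin n} (h1 : a < b) (h2 : b < c) :
    StrictMono ![a, b, c] := by
  rw [Fin.strictMono_iff_lt_succ]
  intro i
  fin_cases i <;> simpa using (by assumption : _)

lemma iff132 {n : ℕ} (π : Equiv.Perm (Fin n)) (x y z : Fin n)
    (h1 : π x < π z) (h2 : π z < π y) :
    ∀ a b : Fin 3, (![1,3,2] : Fin 3 → ℕ) a < ![1,3,2] b ↔ π (![x,y,z] a) < π (![x,y,z] b) := by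
  intro a b
  match a, b with
  | 0, 0 => show (1:ℕ) < 1 ↔ π x < π x; simp
  | 0, 1 => show (1:ℕ) < 3 ↔ π x < π y; simp [h1.trans h2]
  | 0, 2 => show (1:ℕ) < 2 ↔ π x < π z; simp [h1]
  | 1, 0 => show (3:ℕ) < 1 ↔ π y < π x; simp [(h1.trans h2).asymm, not_lt_of_gt]
  | 1, 1 => show (3:ℕ) < 3 ↔ π y < π y; simp
  | 1, 2 => show (3:ℕ) < 2 ↔ π y < π z; simp [h2.asymm, not_lt_of_gt]
  | 2, 0 => show (2:ℕ) < 1 ↔ π z < π x; simp [h1.asymm, not_lt_of_gt]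
  | 2, 1 => show (2:ℕ) < 3 ↔ π z < π y; simp [h2]
  | 2, 2 => show (2:ℕ) < 2 ↔ π z < π z; simp

lemma iff312 {n : ℕ} (π : Equiv.Perm (Fin n)) (x y z : Fin n)
    (h1 : π y < π z) (h2 : π z < π x) :
    ∀ a b : Fin 3, (![3,1,2] : Fin 3 → ℕ) a < ![3,1,2] b ↔ π (![x,y,z] a) < π (![x,y,z] b) := by
  intro a b
  match a, b with
  | 0, 0 => show (3:ℕ) < 3 ↔ π x < π x; simp
  | 0, 1 => show (3:ℕ) < 1 ↔ π x < π y; simp [(h1.trans h2).asymm, not_lt_of_gt]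
  | 0, 2 => show (3:ℕ) < 2 ↔ π x < π z; simp [h2.asymm, not_lt_of_gt]
  | 1, 0 => show (1:ℕ) < 3 ↔ π y < π x; simp [h1.trans h2]
  | 1, 1 => show (1:ℕ) < 1 ↔ π y < π y; simp
  | 1, 2 => show (1:ℕ) < 2 ↔ π y < π z; simp [h1]
  | 2, 0 => show (2:ℕ) < 3 ↔ π z < π x; simp [h2]
  | 2, 1 => show (2:ℕ) < 1 ↔ π z < π y; simp [h1.asymm, not_lt_of_gt]
  | 2, 2 => show (2:ℕ) < 2 ↔ π z < π z; simp

lemma avoids_iff_minmax {n : ℕ} (π : Equiv.Perm (Fin n)) :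
    (PermAvoids π ![1, 3, 2] ∧ PermAvoids π ![3, 1, 2]) ↔ IsMinMax π := by
  constructor
  · rintro ⟨h1, h2⟩ k
    by_contra hc
    push_neg at hc
    obtain ⟨⟨j1, hj1, hv1⟩, ⟨j2, hj2, hv2⟩⟩ := hc
    have hne1 : π j1 ≠ π k := fun h => (ne_of_lt hj1) (π.injective h)
    have hne2 : π j2 ≠ π k := fun h => (ne_of_lt hj2) (π.injective h)
    have hv1' : π k < π j1 := lt_of_le_of_ne hv1 hne1.symm
    have hv2' : π j2 < π k := lt_of_le_of_ne hv2 hne2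
    rcases lt_trichotomy j1 j2 with hj | hj | hj
    · -- positions j1 < j2 < k, values π j2 < π k < π j1 : pattern 312
      exact h2 ⟨![j1, j2, k], strictMono3 hj hj2, iff312 π j1 j2 k hv2' hv1'⟩
    · exact absurd (hj ▸ hv2') (asymm hv1')
    · -- positions j2 < j1 < k, values π j2 < π k < π j1 : pattern 132
      exact h1 ⟨![j2, j1, k], strictMono3 hj hj1, iff132 π j2 j1 k hv2' hv1'⟩
  · intro hm
    constructor
    · rintro ⟨f, hf, hiff⟩
      have h02 : f 0 < f 2 := hf (by decide)
      have h12 : f 1 < f 2 := hf (by decide)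
      have e02 : π (f 0) < π (f 2) := (hiff 0 2).mp (by show (1:ℕ) < 2; norm_num)
      have e21 : π (f 2) < π (f 1) := (hiff 2 1).mp (by show (2:ℕ) < 3; norm_num)
      rcases hm (f 2) with h | h
      · exact absurd (h _ h12) (asymm e21)
      · exact absurd (h _ h02) (asymm e02)
    · rintro ⟨f, hf, hiff⟩
      have h02 : f 0 < f 2 := hf (by decide)
      have h12 : f 1 < f 2 := hf (by decide)
      have e20 : π (f 2) < π (f 0) := (hiff 2 0).mp (by show (2:ℕ) < 3; norm_num)
      have e12 : π (f 1) < π (f 2) := (hiff 1 2).mp (by show (1:ℕ) < 2; norm_num)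
      rcases hm (f 2) with h | h
      · exact absurd (h _ h02) (asymm e20)
      · exact absurd (h _ h12) (asymm e12)


namespace Av

variable {m : ℕ}

/-- number of `false`s at indices ≥ i -/
def Fcnt (b : Fin m → Bool) (i : ℕ) : ℕ :=
  if h : i < m then Fcnt b (i + 1) + (if b ⟨i, h⟩ then 0 else 1) else 0
  termination_by m - i

lemma Fcnt_of_ge (b : Fin m → Bool) {i : ℕ} (h : m ≤ i) : Fcnt b i = 0 := by
  rw [Fcnt]; simp [Nat.not_lt.mpr h]

lemma Fcnt_succ_le (b : Fin m → Bool) (i : ℕ) : Fcnt b (i + 1) ≤ Fcnt b i := by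
  conv_rhs => rw [Fcnt]
  split
  · omega
  · rw [Fcnt_of_ge b (by omega)]

lemma Fcnt_le_succ (b : Fin m → Bool) (i : ℕ) : Fcnt b i ≤ Fcnt b (i + 1) + 1 := by
  conv_lhs => rw [Fcnt]
  split
  · split <;> omega
  · omega

lemma Fcnt_anti (b : Fin m → Bool) {i j : ℕ} (h : i ≤ j) : Fcnt b j ≤ Fcnt b i := by
  induction j, h using Nat.le_induction with
  | base => exact le_refl _
  | succ k hk ih => exact le_trans (Fcnt_succ_le b k) ih

lemma Fcnt_add_le (b : Fin m → Bool) {i j : ℕ} (h : i ≤ j) :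
    Fcnt b i + i ≤ Fcnt b j + j := by
  induction j, h using Nat.le_induction with
  | base => exact le_refl _
  | succ k hk ih => have := Fcnt_le_succ b k; omega

lemma Fcnt_add_le_m (b : Fin m → Bool) {i : ℕ} (h : i ≤ m) : Fcnt b i + i ≤ m := by
  have := Fcnt_add_le b h
  rw [Fcnt_of_ge b le_rfl] at this
  omega

lemma Fcnt_true (b : Fin m → Bool) {i : ℕ} (h : i < m) (hb : b ⟨i, h⟩ = true) :
    Fcnt b i = Fcnt b (i + 1) := by
  rw [Fcnt]; simp [h, hb]

lemma Fcnt_false (b : Fin m → Bool) {i : ℕ} (h : i < m) (hb : b ⟨i, h⟩ = false) :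
    Fcnt b i = Fcnt b (i + 1) + 1 := by
  rw [Fcnt]; simp [h, hb]

lemma Fcnt_eq_card (b : Fin m → Bool) (i : ℕ) :
    Fcnt b i = (Finset.univ.filter fun j : Fin m => i ≤ j.val ∧ b j = false).card := by
  by_cases h : i < m
  · rw [Fcnt]
    simp only [h, dif_pos]
    rw [Fcnt_eq_card b (i + 1)]
    by_cases hb : b ⟨i, h⟩ = true
    · rw [if_pos hb, add_zero]
      congr 1
      apply Finset.filter_congr
      intro j _
      constructor
      · rintro ⟨h1, h2⟩; exact ⟨by omega, h2⟩
      · rintro ⟨h1, h2⟩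
        refine ⟨?_, h2⟩
        rcases Nat.lt_or_ge i j.val with h' | h'
        · omega
        · exfalso
          have : j = ⟨i, h⟩ := Fin.ext (show j.val = i by omega)
          rw [this, hb] at h2; exact absurd h2 (by simp)
    · simp only [Bool.not_eq_true] at hb
      rw [if_neg (by simp [hb])]
      have : (Finset.univ.filter fun j : Fin m => i ≤ j.val ∧ b j = false) =
          insert ⟨i, h⟩ (Finset.univ.filter fun j : Fin m => i + 1 ≤ j.val ∧ b j = false) := by
        ext j
        simp only [Finset.mem_filter, Finset.mem_univ, true_and, Finset.mem_insert]
        constructor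
        · rintro ⟨h1, h2⟩
          rcases Nat.lt_or_ge i j.val with h' | h'
          · exact Or.inr ⟨by omega, h2⟩
          · exact Or.inl (Fin.ext (show j.val = i by omega))
        · rintro (rfl | ⟨h1, h2⟩)
          · exact ⟨le_rfl, hb⟩
          · exact ⟨by omega, h2⟩
      rw [this, Finset.card_insert_of_notMem (by simp)]
  · rw [Fcnt_of_ge b (by omega)]
    symm
    rw [Finset.card_eq_zero, Finset.filter_eq_empty_iff]
    intro j _
    simp only [not_and]
    intro hj
    exact absurd (lt_of_le_of_lt hj j.isLt) (by omega)
  termination_by m - i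

/-- value of the permutation built from `b`, as a natural number -/
def gN (b : Fin m → Bool) : ℕ → ℕ
  | 0 => Fcnt b 0
  | k + 1 => if h : k < m then (if b ⟨k, h⟩ then k + 1 + Fcnt b (k + 1) else Fcnt b (k + 1)) else 0

lemma gN_lt (b : Fin m → Bool) (x : ℕ) (hx : x ≤ m) : gN b x < m + 1 := by
  match x with
  | 0 =>
    have := Fcnt_add_le_m b (i := 0) (by omega)
    simp only [gN]; omega
  | k + 1 =>
    have hk : k < m := by omega
    have := Fcnt_add_le_m b (i := k + 1) (by omega)
    simp only [gN, dif_pos hk]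
    split <;> omega

/-- the permutation built from `b`, as a function -/
def gF (b : Fin m → Bool) (x : Fin (m + 1)) : Fin (m + 1) :=
  ⟨gN b x.val, gN_lt b x.val (by omega)⟩

/-- key ordering lemma -/
lemma gN_order (b : Fin m → Bool) {x k : ℕ} (hk : k < m) (hx : x < k + 1) :
    (b ⟨k, hk⟩ = true → gN b x < gN b (k + 1)) ∧
    (b ⟨k, hk⟩ = false → gN b (k + 1) < gN b x) := by
  constructor
  · intro hb
    have hgky : gN b (k + 1) = k + 1 + Fcnt b (k + 1) := by simp [gN, hk, hb]
    have hFk : Fcnt b k = Fcnt b (k + 1) := Fcnt_true b hk hb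
    rw [hgky]
    match x with
    | 0 =>
      have h1 : Fcnt b 0 + 0 ≤ Fcnt b k + k := Fcnt_add_le b (by omega)
      simp only [gN]; omega
    | j + 1 =>
      have hj : j < m := by omega
      have h1 : Fcnt b (j + 1) + (j + 1) ≤ Fcnt b k + k := Fcnt_add_le b (by omega)
      simp only [gN, dif_pos hj]
      split <;> omega
  · intro hb
    have hgky : gN b (k + 1) = Fcnt b (k + 1) := by simp [gN, hk, hb]
    have hFk : Fcnt b k = Fcnt b (k + 1) + 1 := Fcnt_false b hk hb
    rw [hgky]
    match x with
    | 0 =>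
      have h1 : Fcnt b k ≤ Fcnt b 0 := Fcnt_anti b (by omega)
      simp only [gN]; omega
    | j + 1 =>
      have hj : j < m := by omega
      have h1 : Fcnt b k ≤ Fcnt b (j + 1) := Fcnt_anti b (by omega)
      simp only [gN, dif_pos hj]
      split <;> omega

lemma gF_lt_or_gt (b : Fin m → Bool) {x y : Fin (m + 1)} (h : x < y) :
    gF b x < gF b y ∨ gF b y < gF b x := by
  obtain ⟨k, hk⟩ : ∃ k, y.val = k + 1 := ⟨y.val - 1, by omega⟩
  have hkm : k < m := by omega
  have hx : x.val < k + 1 := by omega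
  have key := gN_order b hkm hx
  cases hb : b ⟨k, hkm⟩ with
  | true =>
    left
    show gN b x.val < gN b y.val
    rw [hk]; exact key.1 hb
  | false =>
    right
    show gN b y.val < gN b x.val
    rw [hk]; exact key.2 hb

lemma gF_injective (b : Fin m → Bool) : Function.Injective (gF b) := by
  intro x y hxy
  by_contra hne
  rcases lt_or_gt_of_ne hne with h | h
  · rcases gF_lt_or_gt b h with h' | h' <;> simp [hxy] at h'
  · rcases gF_lt_or_gt b h with h' | h' <;> simp [hxy] at h'

/-- the permutation built from `b` -/
noncomputable def gPerm (b : Fin m → Bool) : Equiv.Perm (Fin (m + 1)) :=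
  Equiv.ofBijective (gF b) ((Finite.injective_iff_bijective).mp (gF_injective b))

lemma gPerm_apply (b : Fin m → Bool) (x : Fin (m + 1)) : gPerm b x = gF b x := rfl

lemma gPerm_minmax (b : Fin m → Bool) : IsMinMax (gPerm b) := by
  intro y
  rcases Nat.eq_zero_or_pos y.val with h0 | h0
  · left; intro j hj; exfalso; rw [Fin.lt_def, h0] at hj; omega
  · obtain ⟨k, hk⟩ : ∃ k, y.val = k + 1 := ⟨y.val - 1, by omega⟩
    have hkm : k < m := by omega
    cases hb : b ⟨k, hkm⟩ with
    | true =>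
      left; intro j hj
      show gN b j.val < gN b y.val
      rw [hk]
      exact (gN_order b hkm (by omega)).1 hb
    | false =>
      right; intro j hj
      show gN b y.val < gN b j.val
      rw [hk]
      exact (gN_order b hkm (by omega)).2 hb

/-- the sequence of up/down moves of a permutation -/
def toB (π : Equiv.Perm (Fin (m + 1))) : Fin m → Bool :=
  fun k => decide (π k.castSucc < π k.succ)

lemma toB_gPerm (b : Fin m → Bool) : toB (gPerm b) = b := by
  funext k
  have hkm : k.val < m := k.isLt
  have hcs : (k.castSucc : Fin (m+1)).val = k.val := rfl
  have hs : (k.succ : Fin (m+1)).val = k.val + 1 := rfl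
  have key := gN_order b hkm (x := k.val) (by omega)
  have hkk : (⟨k.val, hkm⟩ : Fin m) = k := rfl
  rw [hkk] at key
  unfold toB
  cases hb : b k with
  | true =>
    have h1 : gN b k.val < gN b (k.val + 1) := key.1 hb
    simp only [decide_eq_true_eq]
    show (gN b (k.castSucc).val < gN b (k.succ).val)
    rw [hcs, hs]; exact h1
  | false =>
    have h1 : gN b (k.val + 1) < gN b k.val := key.2 hb
    simp only [decide_eq_false_iff_not]
    show ¬ (gN b (k.castSucc).val < gN b (k.succ).val)
    rw [hcs, hs]; omega

/-- a minmax permutation goes up at step k iff position k+1 is a running maximum -/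
lemma minmax_up_iff (π : Equiv.Perm (Fin (m + 1))) (hm : IsMinMax π)
    (k : Fin m) (x : Fin (m + 1)) (hx : x.val = k.val + 1) :
    (toB π k = true ↔ ∀ j, j < x → π j < π x) ∧
    (toB π k = false ↔ ∀ j, j < x → π x < π j) := by
  have hsucc : (k.succ : Fin (m+1)) = x := Fin.ext (by simp [hx])
  have hcslt : (k.castSucc : Fin (m+1)) < x := by
    rw [Fin.lt_def, hx]; simp
  rcases hm x with h | h
  · have hb : toB π k = true := by
      unfold toB
      rw [hsucc]
      simp only [decide_eq_true_eq]
      exact h _ hcslt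
    refine ⟨⟨fun _ => h, fun _ => hb⟩, ⟨fun hf => by rw [hb] at hf; simp at hf, fun hh => ?_⟩⟩
    exact absurd (h _ hcslt) (asymm (hh _ hcslt))
  · have hb : toB π k = false := by
      unfold toB
      rw [hsucc]
      simp only [decide_eq_false_iff_not, not_lt]
      exact le_of_lt (h _ hcslt)
    refine ⟨⟨fun hf => by rw [hb] at hf; simp at hf, fun hh => ?_⟩, ⟨fun _ => h, fun _ => hb⟩⟩
    exact absurd (h _ hcslt) (asymm (hh _ hcslt))

lemma perm_val_eq_card (π : Equiv.Perm (Fin (m + 1))) (x : Fin (m + 1)) :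
    (π x).val = (Finset.univ.filter fun i => π i < π x).card := by
  have : (Finset.univ.filter fun i => π i < π x).card = (Finset.Iio (π x)).card := by
    apply Finset.card_bij (fun i _ => π i)
    · intro a ha
      simp only [Finset.mem_filter] at ha
      simpa using ha.2
    · intro a ha b hb hab
      exact π.injective hab
    · intro v hv
      refine ⟨π.symm v, ?_, by simp⟩
      simp only [Finset.mem_filter, Finset.mem_univ, true_and, Equiv.apply_symm_apply]
      simpa using hv
  rw [this, Fin.card_Iio]

/-- the "future falses" part of the count -/
lemma card_after (π : Equiv.Perm (Fin (m + 1))) (hm : IsMinMax π) (x : Fin (m + 1)) :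
    (Finset.univ.filter fun i => π i < π x ∧ ¬ i < x).card = Fcnt (toB π) x.val := by
  rw [Fcnt_eq_card]
  apply Finset.card_bij (fun i hi => ⟨i.val - 1, by
      simp only [Finset.mem_filter, Finset.mem_univ, true_and] at hi
      have : i ≠ x := fun h => by rw [h] at hi; exact absurd hi.1 (lt_irrefl _)
      have hxi : x < i := lt_of_le_of_ne (not_lt.mp hi.2) (Ne.symm this)
      have : i.val ≤ m := by omega
      have : x.val < i.val := hxi
      omega⟩)
  · intro i hi
    simp only [Finset.mem_filter, Finset.mem_univ, true_and] at hi ⊢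
    have hne : i ≠ x := fun h => by rw [h] at hi; exact absurd hi.1 (lt_irrefl _)
    have hxi : x < i := lt_of_le_of_ne (not_lt.mp hi.2) (Ne.symm hne)
    have hxiv : x.val < i.val := hxi
    have him : i.val ≤ m := by omega
    refine ⟨show x.val ≤ i.val - 1 by omega, ?_⟩
    rw [(minmax_up_iff π hm ⟨i.val - 1, by omega⟩ i (show i.val = i.val - 1 + 1 by omega)).2]
    rcases hm i with h | h
    · exact absurd hi.1 (asymm (h _ hxi))
    · exact h
  · intro a ha b hb hab
    simp only [Finset.mem_filter, Finset.mem_univ, true_and] at ha hb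
    have ha' : a ≠ x := fun h => by rw [h] at ha; exact absurd ha.1 (lt_irrefl _)
    have hb' : b ≠ x := fun h => by rw [h] at hb; exact absurd hb.1 (lt_irrefl _)
    have hxa : x < a := lt_of_le_of_ne (not_lt.mp ha.2) (Ne.symm ha')
    have hxb : x < b := lt_of_le_of_ne (not_lt.mp hb.2) (Ne.symm hb')
    have hxa' : x.val < a.val := hxa
    have hxb' : x.val < b.val := hxb
    have habv : a.val - 1 = b.val - 1 := Fin.mk.inj_iff.mp hab
    exact Fin.ext (by omega)
  · intro j hj
    simp only [Finset.mem_filter, Finset.mem_univ, true_and] at hj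
    refine ⟨j.succ, ?_, Fin.ext (by simp)⟩
    simp only [Finset.mem_filter, Finset.mem_univ, true_and]
    have hjs : (j.succ : Fin (m+1)).val = j.val + 1 := rfl
    have hxj : x < (j.succ : Fin (m+1)) := by rw [Fin.lt_def, hjs]; omega
    have := (minmax_up_iff π hm j j.succ rfl).2.mp hj.2
    exact ⟨this _ hxj, not_lt.mpr (le_of_lt hxj)⟩

lemma card_split (π : Equiv.Perm (Fin (m + 1))) (x : Fin (m + 1)) :
    (Finset.univ.filter fun i => π i < π x).card =
      (Finset.univ.filter fun i => π i < π x ∧ i < x).card +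
      (Finset.univ.filter fun i => π i < π x ∧ ¬ i < x).card := by
  rw [← Finset.filter_filter, ← Finset.filter_filter]
  exact (Finset.card_filter_add_card_filter_not (fun i => i < x)).symm

lemma card_before_zero (π : Equiv.Perm (Fin (m + 1))) (x : Fin (m + 1)) (hx : x.val = 0) :
    (Finset.univ.filter fun i => π i < π x ∧ i < x).card = 0 := by
  rw [Finset.card_eq_zero, Finset.filter_eq_empty_iff]
  intro i _
  rw [not_and]
  intro _ hix
  rw [Fin.lt_def, hx] at hix
  omega

lemma card_before_true (π : Equiv.Perm (Fin (m + 1))) (hm : IsMinMax π) (k : Fin m)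
    (x : Fin (m + 1)) (hx : x.val = k.val + 1) (hb : toB π k = true) :
    (Finset.univ.filter fun i => π i < π x ∧ i < x).card = x.val := by
  have hall := (minmax_up_iff π hm k x hx).1.mp hb
  have h1 : (Finset.univ.filter fun i => π i < π x ∧ i < x) =
      (Finset.univ.filter fun i : Fin (m+1) => i < x) := by
    apply Finset.filter_congr
    intro i _
    exact ⟨fun h => h.2, fun h => ⟨hall _ h, h⟩⟩
  rw [h1]
  have h2 : (Finset.univ.filter fun i : Fin (m+1) => i < x) = Finset.Iio x := by
    ext i; simp
  rw [h2, Fin.card_Iio]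

lemma card_before_false (π : Equiv.Perm (Fin (m + 1))) (hm : IsMinMax π) (k : Fin m)
    (x : Fin (m + 1)) (hx : x.val = k.val + 1) (hb : toB π k = false) :
    (Finset.univ.filter fun i => π i < π x ∧ i < x).card = 0 := by
  have hall := (minmax_up_iff π hm k x hx).2.mp hb
  rw [Finset.card_eq_zero, Finset.filter_eq_empty_iff]
  intro i _
  rw [not_and]
  intro hlt hix
  exact absurd hlt (asymm (hall _ hix))

lemma gPerm_toB (π : Equiv.Perm (Fin (m + 1))) (hm : IsMinMax π) : gPerm (toB π) = π := by
  apply Equiv.ext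
  intro x
  apply Fin.ext
  show gN (toB π) x.val = (π x).val
  rw [perm_val_eq_card, card_split, card_after π hm]
  rcases Nat.eq_zero_or_pos x.val with h0 | h0
  · rw [card_before_zero π x h0]
    have : gN (toB π) x.val = Fcnt (toB π) 0 := by rw [h0]; rfl
    rw [this, h0]
    omega
  · have hkm : x.val - 1 < m := by have := x.isLt; omega
    set k : Fin m := ⟨x.val - 1, hkm⟩ with hk
    have hx : x.val = k.val + 1 := by simp [hk]; omega
    cases hb : toB π k with
    | true =>
      rw [card_before_true π hm k x hx hb]
      show gN (toB π) x.val = _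
      rw [hx]
      simp only [gN, dif_pos k.isLt]
      have : (⟨k.val, hkm⟩ : Fin m) = k := rfl
      rw [this, hb, if_pos rfl]
    | false =>
      rw [card_before_false π hm k x hx hb]
      show gN (toB π) x.val = _
      rw [hx]
      simp only [gN, dif_pos k.isLt]
      have : (⟨k.val, hkm⟩ : Fin m) = k := rfl
      rw [this, hb]
      simp

noncomputable def avEquiv :
    {π : Equiv.Perm (Fin (m + 1)) //
        PermAvoids π ![1, 3, 2] ∧ PermAvoids π ![3, 1, 2]} ≃ (Fin m → Bool) where
  toFun := fun p => toB p.1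
  invFun := fun b => ⟨gPerm b, (avoids_iff_minmax _).mpr (gPerm_minmax b)⟩
  left_inv := fun p => Subtype.ext (gPerm_toB p.1 ((avoids_iff_minmax _).mp p.2))
  right_inv := toB_gPerm

end Av

theorem av132_312_card (n : ℕ) (hn : 1 ≤ n) :
    Nat.card {π : Equiv.Perm (Fin n) //
        PermAvoids π ![1, 3, 2] ∧ PermAvoids π ![3, 1, 2]} =
      2 ^ (n - 1) := by
  obtain ⟨m, rfl⟩ : ∃ m, n = m + 1 := ⟨n - 1, by omega⟩
  rw [Nat.card_congr Av.avEquiv, Nat.card_eq_fintype_card]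
  simp
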